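/- arXiv:1207.0870 — 5 statements merged into one kernel-verified Lean document; each statement's English description precedes it below -/
import Mathlib

section
/- For every LTL+ formula φ (built from true, false, atomic propositions, conjunction, disjunction, next, until, and release — no negation) and every finite word σ over the alphabet of subsets of atomic propositions, the infinite word σ∅^ω satisfies φ if and only if σρ satisfies φ for every infinite word ρ. -/
open MeasureTheory

/- ## LTL⁺ syntax and semantics -/

inductive LTLPlus (AP : Type) : Type where
  | tt : LTLPlus AP
  | ff : LTLPlus AP
  | atom : AP → LTLPlus AP
  | and : LTLPlus AP → LTLPlus AP → LTLPlus AP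
  | or : LTLPlus AP → LTLPlus AP → LTLPlus AP
  | next : LTLPlus AP → LTLPlus AP
  | untl : LTLPlus AP → LTLPlus AP → LTLPlus AP
  | release : LTLPlus AP → LTLPlus AP → LTLPlus AP

variable {AP : Type}

/-- The suffix `ρ[k…]` of an infinite word. -/
def shift (ρ : ℕ → Set AP) (k : ℕ) : ℕ → Set AP := fun n => ρ (n + k)

/-- Standard LTL satisfaction for the positive fragment. -/
def LTLSat : LTLPlus AP → (ℕ → Set AP) → Prop
  | .tt, _ => True
  | .ff, _ => False
  | .atom a, ρ => a ∈ ρ 0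
  | .and φ ψ, ρ => LTLSat φ ρ ∧ LTLSat ψ ρ
  | .or φ ψ, ρ => LTLSat φ ρ ∨ LTLSat ψ ρ
  | .next φ, ρ => LTLSat φ (shift ρ 1)
  | .untl φ ψ, ρ => ∃ j, LTLSat ψ (shift ρ j) ∧ ∀ i < j, LTLSat φ (shift ρ i)
  | .release φ ψ, ρ => ∀ j, LTLSat ψ (shift ρ j) ∨ ∃ i < j, LTLSat φ (shift ρ i)

/-- Concatenation `σρ` of a finite word with an infinite word. -/
def wcat (σ : List (Set AP)) (ρ : ℕ → Set AP) : ℕ → Set AP :=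
  fun n => if h : n < σ.length then σ.get ⟨n, h⟩ else ρ (n - σ.length)

/- ## Probabilistic transition systems -/

variable {State Tr : Type}

structure PTS (State Tr AP : Type) where
  states : Set State
  transitions : Set Tr
  countable_states : states.Countable
  countable_transitions : transitions.Countable
  init : State
  init_mem : init ∈ states
  source : Tr → State
  target : Tr → State
  prob : Tr → ℝ
  label : State → Set AP
  source_mem : ∀ t ∈ transitions, source t ∈ states
  target_mem : ∀ t ∈ transitions, target t ∈ states
  prob_pos : ∀ t ∈ transitions, 0 < prob t
  prob_le_one : ∀ t ∈ transitions, prob t ≤ 1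
  prob_sum : ∀ s ∈ states,
    (∑' t : { t : Tr // t ∈ transitions ∧ source t = s }, prob t.1) = 1

/-- An execution path: an infinite sequence of transitions starting at the
initial state, with matching targets and sources. -/
def PTS.IsExec (S : PTS State Tr AP) (e : ℕ → Tr) : Prop :=
  (∀ i, e i ∈ S.transitions) ∧ S.source (e 0) = S.init ∧
    ∀ i, S.target (e i) = S.source (e (i + 1))

/-- The finite sequence `l` is a prefix of the infinite sequence `e`. -/
def IsPrefixOf (l : List Tr) (e : ℕ → Tr) : Prop :=
  ∀ i : ℕ, ∀ h : i < l.length, l.get ⟨i, h⟩ = e i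

/-- `l` is a finite prefix of some execution path of `S`, i.e. `l ∈ pref(Exec_S)`. -/
def PTS.IsPrefExec (S : PTS State Tr AP) (l : List Tr) : Prop :=
  ∃ e, S.IsExec e ∧ IsPrefixOf l e

/-- The basic cylinder set `B_S^l` of a finite sequence of transitions. -/
def PTS.Cyl (S : PTS State Tr AP) (l : List Tr) : Set (ℕ → Tr) :=
  { e | S.IsExec e ∧ IsPrefixOf l e }

/-- `S'` extends the search `T` of `S`. -/
def PTS.Extends (S' S : PTS State Tr AP) (T : Finset Tr) : Prop :=
  (∀ t ∈ T, t ∈ S'.transitions) ∧ S'.init = S.init ∧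
    ∀ t ∈ T, S'.source t = S.source t ∧ S'.target t = S.target t ∧
      S'.prob t = S.prob t ∧
      S'.label (S'.source t) = S.label (S.source t) ∧
      S'.label (S'.target t) = S.label (S.target t)

/-- The trace of an execution path. -/
def PTS.traceOf (S : PTS State Tr AP) (e : ℕ → Tr) : ℕ → Set AP :=
  fun i => S.label (S.source (e i))

/-- Satisfaction `e ⊨_S φ` of a linear-time property (a set of infinite words). -/
def PTS.SatPath (S : PTS State Tr AP) (e : ℕ → Tr) (φ : Set (ℕ → Set AP)) : Prop :=
  S.traceOf e ∈ φ

instance : MeasurableSpace (ℕ → Tr) := ⊤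

/-- `μ` behaves as the cylinder measure of the PTS `S`:
`μ(B_S^{t₁…tₙ}) = Π prob(tᵢ)`. -/
def CylSpec (S : PTS State Tr AP) (μ : Measure (ℕ → Tr)) : Prop :=
  ∀ l : List Tr, S.IsPrefExec l →
    μ (S.Cyl l) = ENNReal.ofReal ((l.map S.prob).prod)

/-- The set `B_S^φ(T)`: union of the basic cylinder sets over `e ∈ T*` all of
whose execution paths satisfy `φ`. -/
def PTS.BPhi (S : PTS State Tr AP) (T : Finset Tr) (φ : Set (ℕ → Set AP)) :
    Set (ℕ → Tr) :=
  ⋃ l ∈ { l : List Tr | (∀ t ∈ l, t ∈ T) ∧ ∀ e ∈ S.Cyl l, S.SatPath e φ }, S.Cyl l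

/-- The set `E_S^φ(T)`. -/
def PTS.ESet (S : PTS State Tr AP) (T : Finset Tr) (φ : Set (ℕ → Set AP)) :
    Set (List Tr) :=
  { l | (∀ t ∈ l, t ∈ T) ∧ S.IsPrefExec l ∧ ∀ e ∈ S.Cyl l, S.SatPath e φ }

/-- The set `ME_S^φ(T)` of prefix-minimal elements of `E_S^φ(T)`. -/
def PTS.MESet (S : PTS State Tr AP) (T : Finset Tr) (φ : Set (ℕ → Set AP)) :
    Set (List Tr) :=
  { l ∈ S.ESet T φ | 0 < l.length → ∃ e ∈ S.Cyl l.dropLast, ¬ S.SatPath e φ }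

/-- The progress measure, relative to an assignment `M` of (cylinder) measures
to PTSs: the infimum over all extensions `S'` of `T` of `μ_{S'}(B_{S'}^φ(T))`. -/
noncomputable def progM (M : PTS State Tr AP → Measure (ℕ → Tr))
    (S : PTS State Tr AP) (T : Finset Tr) (φ : Set (ℕ → Set AP)) : ENNReal :=
  ⨅ S' : { S' : PTS State Tr AP // S'.Extends S T }, M S'.1 ((S'.1).BPhi T φ)

/-- The search `T` of `S` has not found a violation of `φ`. -/
def NotFoundViolation (S : PTS State Tr AP) (T : Finset Tr)
    (φ : Set (ℕ → Set AP)) : Prop :=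
  ∃ S' : PTS State Tr AP, S'.Extends S T ∧ ∀ e, S'.IsExec e → S'.SatPath e φ

/- ## The minimal extension S_T -/

open Classical in
/-- `out_S(s)`: total explored outgoing probability of `s`. -/
noncomputable def outP (S : PTS State Tr AP) (T : Finset Tr) (s : State) : ℝ :=
  ∑ t ∈ T.filter (fun t => S.source t = s), S.prob t

/-- The set `S^T_S` of explored states. -/
def STStates (S : PTS State Tr AP) (T : Finset Tr) : Set State :=
  S.source '' ↑T ∪ S.target '' ↑T ∪ {S.init}

/-- `ST` is (a copy of) the minimal extension `S_T` of the search `T` of `S`: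
it has the explored states plus a fresh sink state `s⊥` with empty label and a
probability-one self loop `t⊥`, the explored transitions with unchanged data,
and, for each explored state with explored outgoing probability less than one,
a fresh transition to the sink carrying the residual probability. -/
def IsMinExt (S : PTS State Tr AP) (T : Finset Tr) (ST : PTS State Tr AP) : Prop :=
  ∃ (sbot : State) (tbot : Tr) (ts : State → Tr),
    sbot ∉ STStates S T ∧
    (∀ s, ts s ∉ T) ∧ tbot ∉ T ∧ (∀ s, ts s ≠ tbot) ∧
    Set.InjOn ts { s ∈ STStates S T | outP S T s < 1 } ∧
    ST.states = STStates S T ∪ {sbot} ∧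
    ST.transitions = ↑T ∪ ts '' { s ∈ STStates S T | outP S T s < 1 } ∪ {tbot} ∧
    ST.init = S.init ∧
    (∀ t ∈ T, ST.source t = S.source t ∧ ST.target t = S.target t ∧
      ST.prob t = S.prob t) ∧
    (∀ s ∈ STStates S T, outP S T s < 1 →
      ST.source (ts s) = s ∧ ST.target (ts s) = sbot ∧
      ST.prob (ts s) = 1 - outP S T s) ∧
    ST.source tbot = sbot ∧ ST.target tbot = sbot ∧ ST.prob tbot = 1 ∧
    ST.label sbot = ∅ ∧ (∀ s ∈ STStates S T, ST.label s = S.label s)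

/- ## Truncations and the prefix metric -/

/-- `e[n]`: the execution path `e` truncated at length `n`. -/
def trunc (e : ℕ → Tr) (n : ℕ) : List Tr := (List.range n).map e

/-- The distance `d(e₁,e₂) = inf { 2^{-n} : e₁[n] = e₂[n] }`. -/
noncomputable def pathDist (e₁ e₂ : ℕ → Tr) : ℝ :=
  sInf ((fun n : ℕ => ((1 : ℝ) / 2) ^ n) '' { n | trunc e₁ n = trunc e₂ n })

/-- `A` is closed with respect to the metric `pathDist`. -/
def ClosedPaths (A : Set (ℕ → Tr)) : Prop :=
  ∀ e, (∀ ε : ℝ, 0 < ε → ∃ e' ∈ A, pathDist e' e < ε) → e ∈ A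


lemma LTLSat.mono {AP : Type} (φ : LTLPlus AP) :
    ∀ {ρ₁ ρ₂ : ℕ → Set AP}, (∀ n, ρ₁ n ⊆ ρ₂ n) → LTLSat φ ρ₁ → LTLSat φ ρ₂ := by
  induction φ with
  | tt => intro _ _ _ h; exact h
  | ff => intro _ _ _ h; exact h
  | atom a => intro ρ₁ ρ₂ hsub h; exact hsub 0 h
  | and φ ψ ihφ ihψ => intro ρ₁ ρ₂ hsub h; exact ⟨ihφ hsub h.1, ihψ hsub h.2⟩
  | or φ ψ ihφ ihψ =>
      intro ρ₁ ρ₂ hsub h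
      exact h.imp (ihφ hsub) (ihψ hsub)
  | next φ ih =>
      intro ρ₁ ρ₂ hsub h
      exact ih (fun n => hsub (n + 1)) h
  | untl φ ψ ihφ ihψ =>
      intro ρ₁ ρ₂ hsub h
      obtain ⟨j, hj, hi⟩ := h
      exact ⟨j, ihψ (fun n => hsub (n + j)) hj,
        fun i hij => ihφ (fun n => hsub (n + i)) (hi i hij)⟩
  | release φ ψ ihφ ihψ =>
      intro ρ₁ ρ₂ hsub h j
      rcases h j with hj | ⟨i, hij, hi⟩
      · exact Or.inl (ihψ (fun n => hsub (n + j)) hj)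
      · exact Or.inr ⟨i, hij, ihφ (fun n => hsub (n + i)) hi⟩

/-- For every LTL⁺ formula `φ` and finite word `σ`,
`σ∅^ω ⊨ φ` iff `σρ ⊨ φ` for every infinite word `ρ`. -/
theorem ltlplus_empty_suffix_iff_all {AP : Type} (φ : LTLPlus AP) (σ : List (Set AP)) :
    LTLSat φ (wcat σ (fun _ => (∅ : Set AP))) ↔
      ∀ ρ : ℕ → Set AP, LTLSat φ (wcat σ ρ) := by
  constructor
  · intro h ρ
    refine LTLSat.mono φ (fun n => ?_) h
    unfold wcat
    split
    · exact subset_rfl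
    · exact Set.empty_subset _
  · intro h
    exact h fun _ => ∅
end

section
/- If the progress of a search T of a PTS S with respect to the linear-time property ¬φ is strictly positive, then T has found a violation of φ, i.e., for every PTS S' extending T of S there exists an execution path of S' not satisfying φ. -/
open MeasureTheory

variable {AP : Type}

/- ## Probabilistic transition systems -/

variable {State Tr : Type}

/-- If `prog_S(T, ¬φ) > 0` then `T` has found a violation of
`φ`: every extension of `T` has an execution path not satisfying `φ`. -/
theorem found_violation_of_prog_pos {State Tr AP : Type} (S : PTS State Tr AP)
    (T : Finset Tr) (hT : ↑T ⊆ S.transitions) (φ : Set (ℕ → Set AP))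
    (M : PTS State Tr AP → MeasureTheory.Measure (ℕ → Tr))
    (hM : ∀ S', CylSpec S' (M S'))
    (hpos : 0 < progM M S T φᶜ) :
    ∀ S' : PTS State Tr AP, S'.Extends S T →
      ∃ e, S'.IsExec e ∧ ¬ S'.SatPath e φ := by
  intro S' hext
  have hle : progM M S T φᶜ ≤ M S' (S'.BPhi T φᶜ) :=
    iInf_le (fun S'' : { S'' : PTS State Tr AP // S''.Extends S T } =>
      M S''.1 ((S''.1).BPhi T φᶜ)) ⟨S', hext⟩
  have hpos' : 0 < M S' (S'.BPhi T φᶜ) := lt_of_lt_of_le hpos hle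
  have hne : (S'.BPhi T φᶜ).Nonempty := by
    by_contra h
    rw [Set.not_nonempty_iff_eq_empty] at h
    rw [h, measure_empty] at hpos'
    exact lt_irrefl _ hpos'
  obtain ⟨e, he⟩ := hne
  simp only [PTS.BPhi, Set.mem_iUnion] at he
  obtain ⟨l, ⟨-, hl⟩, hel⟩ := he
  exact ⟨e, hel.1, hl e hel⟩
end

section
/- If a search T of a PTS S has found a violation of the invariant □a (that is, in every PTS extending T of S some execution path violates □a), then prog_S(T, ¬□a) > 0. -/
open MeasureTheory

variable {AP : Type}

/- ## Probabilistic transition systems -/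

variable {State Tr : Type}

/- ## Auxiliary machinery for the proof -/

section Aux

variable {State Tr AP : Type}

/-- `l` is a path of transitions in `P` leading from state `x` to state `y`. -/
def AuxPath (P : PTS State Tr AP) : State → List Tr → State → Prop
  | x, [], y => x = y
  | x, t :: l, y => P.source t = x ∧ AuxPath P (P.target t) l y

lemma aux_exists_out (P : PTS State Tr AP) {s : State} (hs : s ∈ P.states) :
    ∃ t, t ∈ P.transitions ∧ P.source t = s := by
  by_contra h
  push_neg at h
  haveI : IsEmpty { t : Tr // t ∈ P.transitions ∧ P.source t = s } := by
    constructor; rintro ⟨t, ht, hst⟩; exact h t ht hst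
  have h1 := P.prob_sum s hs
  rw [tsum_empty] at h1
  norm_num at h1

lemma aux_exists_exec_from (P : PTS State Tr AP) {s : State} (hs : s ∈ P.states) :
    ∃ g : ℕ → Tr, (∀ i, g i ∈ P.transitions) ∧ P.source (g 0) = s ∧
      ∀ i, P.target (g i) = P.source (g (i + 1)) := by
  have hch : ∀ x : { x // x ∈ P.states }, ∃ t, t ∈ P.transitions ∧ P.source t = x.1 :=
    fun x => aux_exists_out P x.2
  choose f hf1 hf2 using hch
  let walk : ℕ → { x // x ∈ P.states } := fun n =>
    Nat.rec ⟨s, hs⟩ (fun _ p => ⟨P.target (f p), P.target_mem _ (hf1 p)⟩) n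
  refine ⟨fun n => f (walk n), fun i => hf1 _, hf2 _, fun i => ?_⟩
  rw [hf2 (walk (i + 1))]

lemma auxPath_append (P : PTS State Tr AP) {t : Tr} :
    ∀ {l : List Tr} {x y : State}, AuxPath P x l y → P.source t = y →
      AuxPath P x (l ++ [t]) (P.target t) := by
  intro l
  induction l with
  | nil => intro x y h ht; exact ⟨ht.trans h.symm, rfl⟩
  | cons u l ih => intro x y h ht; exact ⟨h.1, ih h.2 ht⟩

lemma auxPath_end_mem (P : PTS State Tr AP) :
    ∀ {l : List Tr} {x y : State}, AuxPath P x l y → x ∈ P.states →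
      (∀ t ∈ l, t ∈ P.transitions) → y ∈ P.states := by
  intro l
  induction l with
  | nil => intro x y h hx _; exact h ▸ hx
  | cons t l ih =>
    intro x y h hx hm
    exact ih h.2 (P.target_mem t (hm t (List.mem_cons_self)))
      (fun u hu => hm u (List.mem_cons_of_mem t hu))

lemma auxPath_extends {S' S : PTS State Tr AP} {T : Finset Tr} (h : S'.Extends S T) :
    ∀ {l : List Tr} {x y : State}, (∀ t ∈ l, t ∈ T) → AuxPath S x l y →
      AuxPath S' x l y := by
  intro l
  induction l with
  | nil => intro x y _ hp; exact hp
  | cons t l ih =>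
    intro x y hm hp
    have hd := h.2.2 t (hm t (List.mem_cons_self))
    refine ⟨hd.1.trans hp.1, ?_⟩
    rw [hd.2.1]
    exact ih (fun u hu => hm u (List.mem_cons_of_mem t hu)) hp.2

lemma aux_exec_of_path (P : PTS State Tr AP) :
    ∀ (l : List Tr) (x y : State), AuxPath P x l y → (∀ t ∈ l, t ∈ P.transitions) →
      y ∈ P.states →
      ∃ e : ℕ → Tr, (∀ i, e i ∈ P.transitions) ∧ P.source (e 0) = x ∧
        (∀ i, P.target (e i) = P.source (e (i + 1))) ∧ IsPrefixOf l e
  | [], x, y, h, _, hy => by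
    obtain ⟨g, g1, g2, g3⟩ := aux_exists_exec_from P hy
    exact ⟨g, g1, by rw [g2, h], g3, fun i hi => absurd hi (by simp)⟩
  | t :: l, x, y, h, hm, hy => by
    obtain ⟨e', e1, e2, e3, e4⟩ := aux_exec_of_path P l (P.target t) y h.2
      (fun u hu => hm u (List.mem_cons_of_mem t hu)) hy
    refine ⟨fun n => Nat.casesOn n t e', fun i => ?_, h.1, fun i => ?_, ?_⟩
    · cases i with
      | zero => exact hm t (List.mem_cons_self)
      | succ n => exact e1 n
    · cases i with
      | zero => exact e2.symm
      | succ n => exact e3 n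
    · intro i hi
      cases i with
      | zero => rfl
      | succ n => exact e4 n (Nat.lt_of_succ_lt_succ hi)

lemma aux_source_at (P : PTS State Tr AP) :
    ∀ (l : List Tr) (x y : State) (e : ℕ → Tr),
      (∀ i, P.target (e i) = P.source (e (i + 1))) → P.source (e 0) = x →
      AuxPath P x l y → IsPrefixOf l e → P.source (e l.length) = y
  | [], x, y, e, _, h0, hp, _ => h0.trans hp
  | t :: l, x, y, e, hc, h0, hp, hpre => by
    have he0 : e 0 = t := (hpre 0 (by simp)).symm
    have key := aux_source_at P l (P.target t) y (fun n => e (n + 1))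
      (fun i => hc (i + 1)) (by rw [← hc 0, he0]) hp.2
      (fun i hi => hpre (i + 1) (Nat.succ_lt_succ hi))
    exact key

lemma aux_tsum_finset {Tr : Type} {P : Tr → Prop} {F : Finset Tr}
    (hset : ∀ t, P t ↔ t ∈ F) (f : Tr → ℝ) :
    (∑' x : { t // P t }, f x.1) = ∑ t ∈ F, f t := by
  rw [← Finset.tsum_subtype F f]
  exact Equiv.tsum_eq (Equiv.subtypeEquivRight hset) (fun x : { t // t ∈ F } => f x.1)

lemma aux_summable (S : PTS State Tr AP) {s : State} (hs : s ∈ S.states) :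
    Summable (fun t : { t : Tr // t ∈ S.transitions ∧ S.source t = s } => S.prob t.1) := by
  by_contra h
  have h1 := S.prob_sum s hs
  rw [tsum_eq_zero_of_not_summable h] at h1
  norm_num at h1

lemma aux_outP_nonneg (S : PTS State Tr AP) (T : Finset Tr) (hT : ↑T ⊆ S.transitions)
    (s : State) : 0 ≤ outP S T s := by
  classical
  unfold outP
  exact Finset.sum_nonneg fun t ht =>
    (S.prob_pos t (hT (Finset.mem_filter.1 ht).1)).le

lemma aux_outP_le_one (S : PTS State Tr AP) (T : Finset Tr) (hT : ↑T ⊆ S.transitions)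
    {s : State} (hs : s ∈ S.states) : outP S T s ≤ 1 := by
  classical
  have hsum := S.prob_sum s hs
  have key : outP S T s = ∑ x ∈ (T.filter fun t => S.source t = s).subtype
      (fun t => t ∈ S.transitions ∧ S.source t = s), S.prob x.1 := by
    have hFF : (T.filter fun t => S.source t = s).filter
        (fun t => t ∈ S.transitions ∧ S.source t = s) = T.filter fun t => S.source t = s :=
      Finset.filter_true_of_mem fun t ht =>
        ⟨hT (Finset.mem_filter.1 ht).1, (Finset.mem_filter.1 ht).2⟩
    rw [Finset.sum_subtype_eq_sum_filter, hFF]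
    unfold outP
    first
    | rfl
    | simp [Finset.filter_congr_decidable]
  rw [key, ← hsum]
  exact Summable.sum_le_tsum _ (fun t _ => (S.prob_pos t.1 t.2.1).le) (aux_summable S hs)

lemma aux_exists_fresh (S : PTS State Tr AP) (T : Finset Tr) (hT : ↑T ⊆ S.transitions)
    {s : State} (hs : s ∈ S.states) (h1 : outP S T s < 1) :
    ∃ t, t ∈ S.transitions ∧ t ∉ T ∧ S.source t = s := by
  classical
  by_contra h
  push_neg at h
  have hset : ∀ t : Tr, (t ∈ S.transitions ∧ S.source t = s) ↔
      t ∈ T.filter fun t => S.source t = s := by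
    intro t
    simp only [Finset.mem_filter]
    constructor
    · rintro ⟨ht1, ht2⟩
      refine ⟨?_, ht2⟩
      by_contra hnT
      exact h t ht1 hnT ht2
    · rintro ⟨ht1, ht2⟩
      exact ⟨hT ht1, ht2⟩
  have hsum := S.prob_sum s hs
  rw [aux_tsum_finset hset] at hsum
  have : outP S T s = 1 := by
    unfold outP
    first
    | rw [← hsum]
    | (rw [← hsum]; simp [Finset.filter_congr_decidable])
  linarith

end Aux

/-- If the search `T` of `S` has found a violation of the
invariant `□a` (every extension has a violating execution path), then
`prog_S(T, ¬□a) > 0`. -/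
theorem prog_pos_of_found_violation_invariant {State Tr AP : Type}
    (S : PTS State Tr AP) (T : Finset Tr) (hT : ↑T ⊆ S.transitions) (a : AP)
    (M : PTS State Tr AP → MeasureTheory.Measure (ℕ → Tr))
    (hM : ∀ S', CylSpec S' (M S'))
    (hviol : ∀ S' : PTS State Tr AP, S'.Extends S T →
      ∃ e, S'.IsExec e ∧ ¬ S'.SatPath e { ρ | ∀ i, a ∈ ρ i }) :
    0 < progM M S T { ρ : ℕ → Set AP | ∀ i, a ∈ ρ i }ᶜ := by
  classical
  set φ : Set (ℕ → Set AP) := { ρ : ℕ → Set AP | ∀ i, a ∈ ρ i }ᶜ with hφ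
  set V : Set State := S.source '' ↑T ∪ S.target '' ↑T with hV
  by_cases hbad : ∃ s : State, (∃ l, (∀ t ∈ l, t ∈ T) ∧ AuxPath S S.init l s) ∧
      s ∈ V ∧ a ∉ S.label s
  · -- a violation within the explored part gives a uniform positive lower bound
    obtain ⟨s, ⟨l, hlT, hpath⟩, hsV, hsa⟩ := hbad
    have hppos : 0 < (l.map S.prob).prod := by
      refine List.prod_pos ?_
      intro x hx
      obtain ⟨t, htl, rfl⟩ := List.mem_map.1 hx
      exact S.prob_pos t (hT (hlT t htl))
    refine lt_of_lt_of_le (ENNReal.ofReal_pos.2 hppos) (le_iInf ?_)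
    rintro ⟨S'', hext⟩
    obtain ⟨hTsub, hinit, hdata⟩ := hext
    have hlT'' : ∀ t ∈ l, t ∈ S''.transitions := fun t ht => hTsub t (hlT t ht)
    have hpath'' : AuxPath S'' S''.init l s := by
      rw [hinit]
      exact auxPath_extends ⟨hTsub, hinit, hdata⟩ hlT hpath
    have hs'' : s ∈ S''.states := auxPath_end_mem S'' hpath'' S''.init_mem hlT''
    obtain ⟨e0, he0m, he0s, he0c, he0p⟩ := aux_exec_of_path S'' l S''.init s hpath'' hlT'' hs''
    have hpe : S''.IsPrefExec l := ⟨e0, ⟨he0m, he0s, he0c⟩, he0p⟩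
    have hlab : S''.label s = S.label s := by
      rcases hsV with ⟨t, htT, rfl⟩ | ⟨t, htT, rfl⟩
      · have h := hdata t htT
        have h2 := h.2.2.2.1
        rwa [h.1] at h2
      · have h := hdata t htT
        have h2 := h.2.2.2.2
        rwa [h.2.1] at h2
    have hmem : l ∈ { l : List Tr | (∀ t ∈ l, t ∈ T) ∧ ∀ e ∈ S''.Cyl l, S''.SatPath e φ } := by
      refine ⟨hlT, fun e he => ?_⟩
      have hsrc : S''.source (e l.length) = s :=
        aux_source_at S'' l S''.init s e he.1.2.2 he.1.2.1 hpath'' he.2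
      simp only [PTS.SatPath, hφ, Set.mem_compl_iff, Set.mem_setOf_eq]
      intro hcon
      have h3 := hcon l.length
      simp only [PTS.traceOf] at h3
      rw [hsrc, hlab] at h3
      exact hsa h3
    calc ENNReal.ofReal (l.map S.prob).prod
        = M S'' (S''.Cyl l) := by
          rw [hM S'' l hpe]
          congr 2
          exact (List.map_congr_left fun t ht => (hdata t (hlT t ht)).2.2.1).symm
      _ ≤ M S'' (S''.BPhi T φ) :=
          measure_mono (Set.subset_biUnion_of_mem (u := S''.Cyl) hmem)
  · -- otherwise we can build an extension all of whose executions satisfy □a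
    exfalso
    push_neg at hbad
    obtain ⟨t0, _⟩ := aux_exists_out S S.init_mem
    haveI : Nonempty Tr := ⟨t0⟩
    have hfresh : ∀ s : State, s ∈ S.states → outP S T s < 1 →
        ∃ t, t ∈ S.transitions ∧ t ∉ T ∧ S.source t = s :=
      fun s hs h1 => aux_exists_fresh S T hT hs h1
    set ts : State → Tr := fun s =>
      if h : s ∈ S.states ∧ outP S T s < 1 then (hfresh s h.1 h.2).choose
      else Classical.arbitrary Tr with hts_def
    have hts : ∀ s, s ∈ S.states → outP S T s < 1 →
        ts s ∈ S.transitions ∧ ts s ∉ T ∧ S.source (ts s) = s := by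
      intro s h1 h2
      rw [hts_def]
      simp only
      rw [dif_pos (⟨h1, h2⟩ : s ∈ S.states ∧ outP S T s < 1)]
      exact (hfresh s h1 h2).choose_spec
    set D : Set State := { s | s ∈ S.states ∧ outP S T s < 1 } with hD
    have hDmem : ∀ {u : State}, u ∈ D → u ∈ S.states ∧ outP S T u < 1 := fun hu => hu
    let S' : PTS State Tr AP :=
      { states := S.states
        transitions := ↑T ∪ ts '' D
        countable_states := S.countable_states
        countable_transitions := S.countable_transitions.mono (by
          rintro t (ht | ⟨u, hu, rfl⟩)
          · exact hT ht
          · exact (hts u (hDmem hu).1 (hDmem hu).2).1)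
        init := S.init
        init_mem := S.init_mem
        source := S.source
        target := fun t => if t ∈ T then S.target t else S.source t
        prob := fun t => if t ∈ T then S.prob t else 1 - outP S T (S.source t)
        label := fun s => if s ∈ V then S.label s else insert a (S.label s)
        source_mem := by
          rintro t (ht | ⟨u, hu, rfl⟩)
          · exact S.source_mem t (hT ht)
          · rw [(hts u (hDmem hu).1 (hDmem hu).2).2.2]
            exact (hDmem hu).1
        target_mem := by
          rintro t (ht | ⟨u, hu, rfl⟩)
          · rw [if_pos (Finset.mem_coe.1 ht)]
            exact S.target_mem t (hT ht)
          · rw [if_neg (hts u (hDmem hu).1 (hDmem hu).2).2.1,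
              (hts u (hDmem hu).1 (hDmem hu).2).2.2]
            exact (hDmem hu).1
        prob_pos := by
          rintro t (ht | ⟨u, hu, rfl⟩)
          · rw [if_pos (Finset.mem_coe.1 ht)]
            exact S.prob_pos t (hT ht)
          · rw [if_neg (hts u (hDmem hu).1 (hDmem hu).2).2.1,
              (hts u (hDmem hu).1 (hDmem hu).2).2.2]
            have := (hDmem hu).2
            linarith
        prob_le_one := by
          rintro t (ht | ⟨u, hu, rfl⟩)
          · rw [if_pos (Finset.mem_coe.1 ht)]
            exact S.prob_le_one t (hT ht)
          · rw [if_neg (hts u (hDmem hu).1 (hDmem hu).2).2.1,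
              (hts u (hDmem hu).1 (hDmem hu).2).2.2]
            have := aux_outP_nonneg S T hT u
            linarith
        prob_sum := by
          intro s hs
          have hset : ∀ t : Tr, (t ∈ (↑T ∪ ts '' D : Set Tr) ∧ S.source t = s) ↔
              t ∈ (T.filter fun t => S.source t = s) ∪
                (if h : s ∈ S.states ∧ outP S T s < 1 then {ts s} else ∅) := by
            intro t
            simp only [Finset.mem_union, Finset.mem_filter]
            constructor
            · rintro ⟨ht | ⟨u, hu, rfl⟩, hsrc⟩
              · exact Or.inl ⟨ht, hsrc⟩
              · have hu' := hDmem hu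
                have hsu : u = s := by rw [← (hts u hu'.1 hu'.2).2.2, hsrc]
                subst hsu
                rw [dif_pos hu']
                exact Or.inr (Finset.mem_singleton_self _)
            · rintro (⟨ht1, ht2⟩ | ht)
              · exact ⟨Or.inl ht1, ht2⟩
              · by_cases hsD : s ∈ S.states ∧ outP S T s < 1
                · rw [dif_pos hsD, Finset.mem_singleton] at ht
                  subst ht
                  exact ⟨Or.inr ⟨s, hsD, rfl⟩, (hts s hsD.1 hsD.2).2.2⟩
                · rw [dif_neg hsD] at ht
                  exact absurd ht (Finset.notMem_empty t)
          have hk := aux_tsum_finset hset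
            (fun t => if t ∈ T then S.prob t else 1 - outP S T (S.source t))
          refine hk.trans ?_
          have hdisj : Disjoint (T.filter fun t => S.source t = s)
              (if h : s ∈ S.states ∧ outP S T s < 1 then {ts s} else ∅) := by
            rw [Finset.disjoint_left]
            intro t ht1 ht2
            by_cases hsD : s ∈ S.states ∧ outP S T s < 1
            · rw [dif_pos hsD, Finset.mem_singleton] at ht2
              subst ht2
              exact (hts s hsD.1 hsD.2).2.1 (Finset.mem_filter.1 ht1).1
            · rw [dif_neg hsD] at ht2
              exact absurd ht2 (Finset.notMem_empty t)
          rw [Finset.sum_union hdisj]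
          have hfirst : (∑ t ∈ T.filter fun t => S.source t = s,
              (if t ∈ T then S.prob t else 1 - outP S T (S.source t))) = outP S T s := by
            rw [Finset.sum_congr rfl (fun t ht => if_pos (Finset.mem_filter.1 ht).1)]
            unfold outP
            first
            | rfl
            | simp [Finset.filter_congr_decidable]
          rw [hfirst]
          by_cases hsD : s ∈ S.states ∧ outP S T s < 1
          · rw [dif_pos hsD, Finset.sum_singleton,
              if_neg (hts s hsD.1 hsD.2).2.1, (hts s hsD.1 hsD.2).2.2]
            ring
          · rw [dif_neg hsD, Finset.sum_empty, add_zero]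
            have h1 : ¬ outP S T s < 1 := fun h => hsD ⟨hs, h⟩
            have h2 := aux_outP_le_one S T hT hs
            linarith }
    have hext : S'.Extends S T := by
      refine ⟨fun t ht => Or.inl ht, rfl, fun t ht => ?_⟩
      have hsV : S.source t ∈ V := Or.inl ⟨t, ht, rfl⟩
      have htV : S.target t ∈ V := Or.inr ⟨t, ht, rfl⟩
      refine ⟨rfl, if_pos ht, if_pos ht, ?_, ?_⟩
      · show (if S.source t ∈ V then S.label (S.source t) else _) = _
        rw [if_pos hsV]
      · show (if (if t ∈ T then S.target t else S.source t) ∈ V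
            then S.label (if t ∈ T then S.target t else S.source t)
            else insert a (S.label (if t ∈ T then S.target t else S.source t))) =
          S.label (S.target t)
        rw [if_pos ht, if_pos htV]
    obtain ⟨e, hexec, hnot⟩ := hviol S' hext
    apply hnot
    have hreach : ∀ i, ∃ l, (∀ t ∈ l, t ∈ T) ∧ AuxPath S S.init l (S.source (e i)) := by
      intro i
      induction i with
      | zero =>
        refine ⟨[], fun t ht => absurd ht List.not_mem_nil, ?_⟩
        exact (hexec.2.1 : S.source (e 0) = S.init).symm
      | succ i ih =>
        obtain ⟨l, hl1, hl2⟩ := ih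
        rcases hexec.1 i with hti | ⟨u, hu, hts_eq⟩
        · refine ⟨l ++ [e i], ?_, ?_⟩
          · intro t ht
            rcases List.mem_append.1 ht with h | h
            · exact hl1 t h
            · rw [List.mem_singleton.1 h]
              exact hti
          · have h2 : S.source (e (i + 1)) = S.target (e i) :=
              (hexec.2.2 i).symm.trans (if_pos hti)
            rw [h2]
            exact auxPath_append S hl2 rfl
        · have hu' := hDmem hu
          have hnT : e i ∉ T := hts_eq ▸ (hts u hu'.1 hu'.2).2.1
          have h2 : S.source (e (i + 1)) = S.source (e i) :=
            (hexec.2.2 i).symm.trans (if_neg hnT)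
          exact ⟨l, hl1, h2 ▸ hl2⟩
    show ∀ i, a ∈ S'.traceOf e i
    intro i
    obtain ⟨l, hl1, hl2⟩ := hreach i
    show a ∈ (if S.source (e i) ∈ V then S.label (S.source (e i))
      else insert a (S.label (S.source (e i))))
    by_cases hV' : S.source (e i) ∈ V
    · rw [if_pos hV']
      exact hbad _ ⟨l, hl1, hl2⟩ hV'
    · rw [if_neg hV']
      exact Set.mem_insert _ _
end

section
/- If a search T of a PTS S has not found a violation of a linear-time property φ, then every execution path of the minimal extension S_T consisting solely of explored transitions satisfies φ: for all e ∈ T^ω ∩ Exec_{S_T}, e ⊨_{S_T} φ. -/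
open MeasureTheory

variable {AP : Type}

/- ## Probabilistic transition systems -/

variable {State Tr : Type}

/-- If the search `T` of `S` has not found a violation of a
linear-time property `φ`, then every execution path of `S_T` consisting solely
of explored transitions satisfies `φ`. -/
theorem sat_of_not_found_violation {State Tr AP : Type} (S ST : PTS State Tr AP)
    (T : Finset Tr) (hT : ↑T ⊆ S.transitions) (hST : IsMinExt S T ST)
    (φ : Set (ℕ → Set AP)) (hnv : NotFoundViolation S T φ) :
    ∀ e : ℕ → Tr, (∀ i, e i ∈ T) → ST.IsExec e → ST.SatPath e φ := by
  obtain ⟨S', ⟨hmem, hinit, hdata⟩, hsat⟩ := hnv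
  obtain ⟨sbot, tbot, ts, _, _, _, _, _, _, _, hSTinit, hSTdata, _, _, _, _, _, hlab⟩ := hST
  intro e heT ⟨_, h0, hchain⟩
  have hsrcST : ∀ i, ST.source (e i) = S.source (e i) := fun i => (hSTdata _ (heT i)).1
  have hexec : S'.IsExec e := by
    refine ⟨fun i => hmem _ (heT i), ?_, fun i => ?_⟩
    · rw [(hdata _ (heT 0)).1, hinit, ← hSTinit, ← hsrcST 0, h0]
    · rw [(hdata _ (heT i)).2.1, (hdata _ (heT (i+1))).1,
        ← (hSTdata _ (heT i)).2.1, ← hsrcST (i+1), hchain i]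
  have := hsat e hexec
  unfold PTS.SatPath PTS.traceOf at this ⊢
  convert this using 2 with i
  rw [hsrcST i, hlab _ (Or.inl (Or.inl ⟨e i, heT i, rfl⟩)),
    ← (hdata _ (heT i)).2.2.2.1]
end

section
/- If a PTS S' extends a search T of a PTS S and A ⊆ T^ω ∩ Exec_S is closed in the prefix metric, then μ_S(A) = μ_{S'}(A); in particular, μ_S(T^ω ∩ Exec_S) = μ_{S_T}(T^ω ∩ Exec_{S_T}). -/
open MeasureTheory

variable {AP : Type}

/- ## Probabilistic transition systems -/

variable {State Tr : Type}

/- ## Auxiliary lemmas -/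

section Aux

variable {State Tr AP : Type}

lemma trunc_length (e : ℕ → Tr) (n : ℕ) : (trunc e n).length = n := by
  simp [trunc]

lemma trunc_get (e : ℕ → Tr) (n i : ℕ) (h : i < (trunc e n).length) :
    (trunc e n).get ⟨i, h⟩ = e i := by
  simp [trunc]

lemma trunc_eq_iff (e e' : ℕ → Tr) (n : ℕ) :
    trunc e n = trunc e' n ↔ ∀ i < n, e i = e' i := by
  constructor
  · intro h i hi
    have h1 : i < (trunc e n).length := by simp [trunc_length, hi]
    have h2 : i < (trunc e' n).length := by simp [trunc_length, hi]
    rw [← trunc_get e n i h1, ← trunc_get e' n i h2]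
    simp [h]
  · intro h
    apply List.ext_get (by simp [trunc_length])
    intro i h1 h2
    rw [trunc_get, trunc_get]
    exact h i (by simpa [trunc_length] using h1)

lemma isPrefixOf_trunc (e : ℕ → Tr) (n : ℕ) : IsPrefixOf (trunc e n) e := by
  intro i h
  exact trunc_get e n i h

lemma eq_trunc_of_prefix {l : List Tr} {e : ℕ → Tr} (h : IsPrefixOf l e) :
    l = trunc e l.length := by
  apply List.ext_get (by simp [trunc_length])
  intro i h1 h2
  rw [trunc_get, h i h1]

/-- Execution paths within `T` transfer between `S` and an extension `S'`. -/
lemma exec_transfer {S S' : PTS State Tr AP} {T : Finset Tr}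
    (hT : ↑T ⊆ S.transitions) (h : S'.Extends S T) {e : ℕ → Tr}
    (he : ∀ i, e i ∈ T) : S.IsExec e ↔ S'.IsExec e := by
  obtain ⟨h1, h2, h3⟩ := h
  constructor
  · rintro ⟨ht, h0, hs⟩
    refine ⟨fun i => h1 _ (he i), ?_, fun i => ?_⟩
    · rw [(h3 _ (he 0)).1, h0, h2]
    · rw [(h3 _ (he i)).2.1, (h3 _ (he (i + 1))).1]; exact hs i
  · rintro ⟨ht, h0, hs⟩
    refine ⟨fun i => hT (he i), ?_, fun i => ?_⟩
    · rw [← (h3 _ (he 0)).1, h0, h2]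
    · rw [← (h3 _ (he i)).2.1, ← (h3 _ (he (i + 1))).1]; exact hs i

/-- If `pathDist e' e < (1/2)^n` then the two paths agree below `n`. -/
lemma agree_of_pathDist_lt {e' e : ℕ → Tr} {n : ℕ}
    (h : pathDist e' e < ((1 : ℝ) / 2) ^ n) : ∀ i < n, e' i = e i := by
  have hne : ((fun k : ℕ => ((1 : ℝ) / 2) ^ k) ''
      { k | trunc e' k = trunc e k }).Nonempty :=
    ⟨1, 0, by simp [trunc], rfl⟩
  obtain ⟨x, ⟨k, hk, rfl⟩, hlt⟩ := exists_lt_of_csInf_lt hne h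
  have hnk : n < k := by
    by_contra hc
    exact absurd (pow_le_pow_of_le_one (by norm_num) (by norm_num)
      (not_lt.mp hc)) (not_le.mpr hlt)
  intro i hi
  exact (trunc_eq_iff e' e k).mp hk i (lt_trans hi hnk)

lemma pathDist_le {e' e : ℕ → Tr} {n : ℕ} (h : trunc e' n = trunc e n) :
    pathDist e' e ≤ ((1 : ℝ) / 2) ^ n := by
  apply csInf_le
  · exact ⟨0, by rintro x ⟨k, _, rfl⟩; positivity⟩
  · exact ⟨n, h, rfl⟩

/-- The finite prefixes of elements of `A` of length `n`. -/
def Apre (A : Set (ℕ → Tr)) (n : ℕ) : Set (List Tr) :=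
  (fun e => trunc e n) '' A

lemma finite_lists (T : Finset Tr) :
    ∀ n, { l : List Tr | l.length = n ∧ ∀ t ∈ l, t ∈ T }.Finite := by
  intro n
  induction n with
  | zero =>
    apply Set.Finite.subset (Set.finite_singleton ([] : List Tr))
    rintro l ⟨hl, -⟩
    simp [List.length_eq_zero_iff.mp hl]
  | succ n ih =>
    apply Set.Finite.subset (Set.Finite.image2 List.cons T.finite_toSet ih)
    rintro l ⟨hl, hm⟩
    cases l with
    | nil => simp at hl
    | cons a l =>
      exact Set.mem_image2_of_mem (hm a (by simp))
        ⟨by simpa using hl, fun t ht => hm t (List.mem_cons_of_mem _ ht)⟩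

lemma Apre_finite {A : Set (ℕ → Tr)} {T : Finset Tr}
    (h : ∀ e ∈ A, ∀ i, e i ∈ T) (n : ℕ) : (Apre A n).Finite := by
  apply Set.Finite.subset (finite_lists T n)
  rintro l ⟨e, he, rfl⟩
  refine ⟨trunc_length e n, fun t ht => ?_⟩
  obtain ⟨i, hi, rfl⟩ := by simpa [trunc] using ht
  exact h e he i

lemma mem_Apre_length {A : Set (ℕ → Tr)} {n : ℕ} {l : List Tr}
    (h : l ∈ Apre A n) : l.length = n := by
  obtain ⟨e, -, rfl⟩ := h
  exact trunc_length e n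

/-- Any set in the `⊤` σ-algebra is measurable. -/
lemma top_measurable (s : Set (ℕ → Tr)) : MeasurableSet s := trivial

/-- The union over `Apre A n` of basic cylinders, for a PTS `S₀`. -/
lemma measure_biUnion_Apre (S₀ : PTS State Tr AP) (μ₀ : Measure (ℕ → Tr))
    (hμ : CylSpec S₀ μ₀) (A : Set (ℕ → Tr)) (T : Finset Tr)
    (hmem : ∀ e ∈ A, ∀ i, e i ∈ T) (hex : ∀ e ∈ A, S₀.IsExec e) (n : ℕ) :
    μ₀ (⋃ l ∈ Apre A n, S₀.Cyl l) =
      ∑' l : Apre A n, ENNReal.ofReal ((l.1.map S₀.prob).prod) := by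
  rw [measure_biUnion ((Apre_finite hmem n).countable) ?_ (fun _ _ => top_measurable _)]
  · apply tsum_congr
    rintro ⟨l, hl⟩
    obtain ⟨e, he, rfl⟩ := hl
    exact hμ _ ⟨e, hex e he, isPrefixOf_trunc e n⟩
  · rintro l₁ hl₁ l₂ hl₂ hne
    rw [Function.onFun, Set.disjoint_left]
    rintro e ⟨-, hp₁⟩ ⟨-, hp₂⟩
    apply hne
    rw [eq_trunc_of_prefix hp₁, eq_trunc_of_prefix hp₂,
      mem_Apre_length hl₁, mem_Apre_length hl₂]

lemma iInter_biUnion_Apre (S₀ : PTS State Tr AP) (A : Set (ℕ → Tr))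
    (hex : ∀ e ∈ A, S₀.IsExec e) (hcl : ClosedPaths A) :
    (⋂ n, ⋃ l ∈ Apre A n, S₀.Cyl l) = A := by
  apply Set.Subset.antisymm
  · intro e he
    apply hcl
    intro ε hε
    obtain ⟨n, hn⟩ := exists_pow_lt_of_lt_one hε (by norm_num : (1 : ℝ) / 2 < 1)
    have hn2 : e ∈ ⋃ l ∈ Apre A (n + 1), S₀.Cyl l := Set.mem_iInter.mp he (n + 1)
    obtain ⟨l, hlm, -, hp⟩ := Set.mem_iUnion₂.mp hn2
    obtain ⟨e', he', rfl⟩ := hlm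
    have hag : trunc e' (n + 1) = trunc e (n + 1) := by
      rw [trunc_eq_iff]
      intro i hi
      have h1 : i < (trunc e' (n + 1)).length := by simpa [trunc_length] using hi
      have := hp i h1
      rw [trunc_get e' (n + 1) i h1] at this
      exact this
    refine ⟨e', he', lt_of_le_of_lt (pathDist_le hag) ?_⟩
    · calc ((1:ℝ)/2) ^ (n+1) ≤ ((1:ℝ)/2) ^ n := by
            apply pow_le_pow_of_le_one <;> norm_num
        _ < ε := hn
  · intro e he
    apply Set.mem_iInter.mpr
    intro n
    exact Set.mem_biUnion ⟨e, he, rfl⟩ ⟨hex e he, isPrefixOf_trunc e n⟩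

/-- The cylinder measure of a closed set of `T`-paths depends only on the
probabilities of the transitions in `T`. -/
lemma measure_closed_eq_iInf (S₀ : PTS State Tr AP) (μ₀ : Measure (ℕ → Tr))
    (hμ : CylSpec S₀ μ₀) (A : Set (ℕ → Tr)) (T : Finset Tr)
    (hmem : ∀ e ∈ A, ∀ i, e i ∈ T) (hex : ∀ e ∈ A, S₀.IsExec e)
    (hcl : ClosedPaths A) :
    μ₀ A = ⨅ n, ∑' l : Apre A n, ENNReal.ofReal ((l.1.map S₀.prob).prod) := by
  have key : ∀ n, μ₀ (⋃ l ∈ Apre A n, S₀.Cyl l) =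
      ∑' l : Apre A n, ENNReal.ofReal ((l.1.map S₀.prob).prod) :=
    measure_biUnion_Apre S₀ μ₀ hμ A T hmem hex
  have hanti : Antitone (fun n => ⋃ l ∈ Apre A n, S₀.Cyl l) := by
    intro m n hmn
    intro e he
    obtain ⟨l, hlm, hex', hp⟩ := Set.mem_iUnion₂.mp he
    obtain ⟨e', he', rfl⟩ := hlm
    refine Set.mem_biUnion ⟨e', he', rfl⟩ ⟨hex', ?_⟩
    intro i hi
    have him : i < n := lt_of_lt_of_le (by simpa [trunc_length] using hi) hmn
    rw [trunc_get e' m i hi]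
    have : (trunc e' n).get ⟨i, by simpa [trunc_length] using him⟩ = e i :=
      hp i (by simpa [trunc_length] using him)
    rw [trunc_get e' n i] at this
    exact this
  have hfin : μ₀ (⋃ l ∈ Apre A 0, S₀.Cyl l) ≠ ⊤ := by
    rw [key 0]
    haveI : Fintype (Apre A 0) := (Apre_finite hmem 0).fintype
    rw [tsum_fintype]
    exact (ENNReal.sum_lt_top.mpr (fun _ _ => ENNReal.ofReal_lt_top)).ne
  have h1 : μ₀ A = ⨅ n, μ₀ (⋃ l ∈ Apre A n, S₀.Cyl l) := by
    conv_lhs => rw [← iInter_biUnion_Apre S₀ A hex hcl]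
    exact Directed.measure_iInter (fun n => (top_measurable _).nullMeasurableSet)
      (hanti.directed_ge) ⟨0, hfin⟩
  rw [h1]
  exact iInf_congr key

/-- Key step: measures of a closed set of `T`-paths agree for `S` and any
extension `S'`. -/
lemma measure_closed_eq_of_extends {S S' : PTS State Tr AP} {T : Finset Tr}
    (hT : ↑T ⊆ S.transitions) (h : S'.Extends S T)
    {μS μS' : Measure (ℕ → Tr)} (hμS : CylSpec S μS) (hμS' : CylSpec S' μS')
    {A : Set (ℕ → Tr)} (hAT : ∀ e ∈ A, (∀ i, e i ∈ T) ∧ S.IsExec e)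
    (hcl : ClosedPaths A) : μS A = μS' A := by
  have hmem : ∀ e ∈ A, ∀ i, e i ∈ T := fun e he => (hAT e he).1
  have hexS : ∀ e ∈ A, S.IsExec e := fun e he => (hAT e he).2
  have hexS' : ∀ e ∈ A, S'.IsExec e := fun e he =>
    (exec_transfer hT h (hmem e he)).mp (hexS e he)
  rw [measure_closed_eq_iInf S μS hμS A T hmem hexS hcl,
    measure_closed_eq_iInf S' μS' hμS' A T hmem hexS' hcl]
  apply iInf_congr
  intro n
  apply tsum_congr
  rintro ⟨l, hl⟩
  obtain ⟨e, he, rfl⟩ := hl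
  congr 1
  apply congrArg
  apply List.map_congr_left
  intro t ht
  obtain ⟨i, hi, rfl⟩ := by simpa [trunc] using ht
  exact ((h.2.2 _ (hmem e he i)).2.2.1).symm

/-- The minimal extension is an extension. -/
lemma minExt_extends {S ST : PTS State Tr AP} {T : Finset Tr}
    (hST : IsMinExt S T ST) : ST.Extends S T := by
  obtain ⟨sbot, tbot, ts, hsbot, hts, htbot, htsbot, hinj, hstates, htrans,
    hinit, hTdata, hresid, hsrc, htgt, hprob, hlbot, hlab⟩ := hST
  refine ⟨fun t ht => by rw [htrans]; exact Or.inl (Or.inl ht), hinit,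
    fun t ht => ?_⟩
  obtain ⟨hs, htg, hp⟩ := hTdata t ht
  have hsm : S.source t ∈ STStates S T := Or.inl (Or.inl ⟨t, ht, rfl⟩)
  have htm : S.target t ∈ STStates S T := Or.inl (Or.inr ⟨t, ht, rfl⟩)
  exact ⟨hs, htg, hp, by rw [hs, hlab _ hsm], by rw [htg, hlab _ htm]⟩

/-- The set of `T`-executions is closed. -/
lemma closed_TExec (S : PTS State Tr AP) (T : Finset Tr) :
    ClosedPaths { e : ℕ → Tr | (∀ i, e i ∈ T) ∧ S.IsExec e } := by
  intro e he
  have key : ∀ n : ℕ, ∃ e', ((∀ i, e' i ∈ T) ∧ S.IsExec e') ∧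
      ∀ i < n, e' i = e i := by
    intro n
    obtain ⟨e', he', hd⟩ := he (((1 : ℝ) / 2) ^ n) (by positivity)
    exact ⟨e', he', agree_of_pathDist_lt hd⟩
  refine ⟨fun i => ?_, fun i => ?_, ?_, fun i => ?_⟩
  · obtain ⟨e', ⟨hT', _⟩, hag⟩ := key (i + 1)
    rw [← hag i (Nat.lt_succ_self i)]; exact hT' i
  · obtain ⟨e', ⟨_, hex', _, _⟩, hag⟩ := key (i + 1)
    rw [← hag i (Nat.lt_succ_self i)]; exact hex' i
  · obtain ⟨e', ⟨_, _, h0, _⟩, hag⟩ := key 1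
    rw [← hag 0 Nat.one_pos]; exact h0
  · obtain ⟨e', ⟨_, _, _, hs⟩, hag⟩ := key (i + 2)
    rw [← hag i (by omega), ← hag (i + 1) (by omega)]; exact hs i

end Aux

/-- If `S'` extends the search `T` of `S` and
`A ⊆ T^ω ∩ Exec_S` is closed in the prefix metric, then `μ_S(A) = μ_{S'}(A)`;
in particular `μ_S(T^ω ∩ Exec_S) = μ_{S_T}(T^ω ∩ Exec_{S_T})`. -/
theorem measure_eq_of_closed {State Tr AP : Type} (S S' ST : PTS State Tr AP)
    (T : Finset Tr) (hT : ↑T ⊆ S.transitions) (h : S'.Extends S T)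
    (hST : IsMinExt S T ST)
    (μS μS' μST : MeasureTheory.Measure (ℕ → Tr))
    (hμS : CylSpec S μS) (hμS' : CylSpec S' μS') (hμST : CylSpec ST μST)
    (A : Set (ℕ → Tr)) (hAT : ∀ e ∈ A, (∀ i, e i ∈ T) ∧ S.IsExec e)
    (hcl : ClosedPaths A) :
    μS A = μS' A ∧
      μS { e : ℕ → Tr | (∀ i, e i ∈ T) ∧ S.IsExec e } =
        μST { e : ℕ → Tr | (∀ i, e i ∈ T) ∧ ST.IsExec e } := by
  constructor
  · exact measure_closed_eq_of_extends hT h hμS hμS' hAT hcl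
  · have hext := minExt_extends hST
    have hseteq : { e : ℕ → Tr | (∀ i, e i ∈ T) ∧ S.IsExec e } =
        { e : ℕ → Tr | (∀ i, e i ∈ T) ∧ ST.IsExec e } := by
      ext e
      exact and_congr_right fun hm => exec_transfer hT hext hm
    rw [← hseteq]
    exact measure_closed_eq_of_extends hT hext hμS hμST
      (fun e he => he) (closed_TExec S T)
end
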